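/- arXiv:1703.10201 — 4 statements merged into one kernel-verified Lean document; each statement's English description precedes it below -/
import Mathlib

section
/- Let K ≥ 1 be a real number, ε a nonzero real number, and g : (0,1) → ℝ differentiable and nonvanishing. Suppose ψ, φ : (0,1) → ℂ are differentiable and satisfy i ε ψ′(r) = (g(r)/(K+1)) [K(1−r) ψ(r) − √K (1−r) φ(r)] and i ε φ′(r) = (g(r)/(K+1)) [−√K(1−r) ψ(r) + (1+rK) φ(r)] on (0,1). Then ψ is twice differentiable on (0,1) and satisfies the decoupled second-order equation ε² (1−r) ψ″(r) + ε [ε(1 − (g′(r)/g(r))(1−r)) + i(1−r) g(r)] ψ′(r) − (g(r)² K (1−r)² r/(K+1)) ψ(r) = 0 for all r ∈ (0,1). -/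
/-- the marked-state amplitude `ψ` of the coupled Grover Schrödinger system is
twice differentiable on `(0,1)` and satisfies the decoupled second-order equation
`ε²(1-r)ψ″ + ε[ε(1 - (g′/g)(1-r)) + i(1-r)g]ψ′ - (g²K(1-r)²r/(K+1))ψ = 0`. -/
theorem grover_psi_second_order_ode
    (K : ℝ) (hK : 1 ≤ K) (ε : ℝ) (hε : ε ≠ 0) (g : ℝ → ℝ)
    (hg : ∀ r ∈ Set.Ioo (0 : ℝ) 1, DifferentiableAt ℝ g r)
    (hgne : ∀ r ∈ Set.Ioo (0 : ℝ) 1, g r ≠ 0)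
    (ψ φ : ℝ → ℂ)
    (hψd : ∀ r ∈ Set.Ioo (0 : ℝ) 1, DifferentiableAt ℝ ψ r)
    (hφd : ∀ r ∈ Set.Ioo (0 : ℝ) 1, DifferentiableAt ℝ φ r)
    (heq1 : ∀ r ∈ Set.Ioo (0 : ℝ) 1,
      Complex.I * (ε : ℂ) * deriv ψ r =
        ((g r : ℂ) / ((K : ℂ) + 1)) *
          ((K : ℂ) * (1 - (r : ℂ)) * ψ r
            - (Real.sqrt K : ℂ) * (1 - (r : ℂ)) * φ r))
    (heq2 : ∀ r ∈ Set.Ioo (0 : ℝ) 1,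
      Complex.I * (ε : ℂ) * deriv φ r =
        ((g r : ℂ) / ((K : ℂ) + 1)) *
          (-(Real.sqrt K : ℂ) * (1 - (r : ℂ)) * ψ r
            + (1 + (r : ℂ) * (K : ℂ)) * φ r)) :
    ∀ r ∈ Set.Ioo (0 : ℝ) 1,
      DifferentiableAt ℝ (deriv ψ) r
      ∧ (ε : ℂ) ^ 2 * (1 - (r : ℂ)) * deriv (deriv ψ) r
          + (ε : ℂ) * ((ε : ℂ) * (1 - ((deriv g r / g r : ℝ) : ℂ) * (1 - (r : ℂ)))
              + Complex.I * (1 - (r : ℂ)) * (g r : ℂ)) * deriv ψ r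
          - ((g r : ℂ) ^ 2 * (K : ℂ) * (1 - (r : ℂ)) ^ 2 * (r : ℂ) / ((K : ℂ) + 1)) * ψ r
        = 0 := by
  intro r hr
  have hK0 : (0:ℝ) ≤ K := le_trans zero_le_one hK
  have hεC : (ε:ℂ) ≠ 0 := Complex.ofReal_ne_zero.mpr hε
  have hIε : Complex.I * (ε:ℂ) ≠ 0 := mul_ne_zero Complex.I_ne_zero hεC
  have hK1 : ((K:ℂ) + 1) ≠ 0 := by
    have h : (K:ℝ) + 1 ≠ 0 := by positivity
    exact_mod_cast Complex.ofReal_ne_zero.mpr h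
  set s : ℝ := Real.sqrt K with hsdef
  set F : ℝ → ℂ := fun x => (Complex.I * (ε:ℂ))⁻¹ *
      ((g x : ℂ) / ((K:ℂ)+1) *
        ((K:ℂ) * (1 - (x:ℂ)) * ψ x - (s:ℂ) * (1 - (x:ℂ)) * φ x)) with hF
  have hmemnhds : Set.Ioo (0:ℝ) 1 ∈ nhds r := isOpen_Ioo.mem_nhds hr
  have hEq : deriv ψ =ᶠ[nhds r] F := by
    filter_upwards [hmemnhds] with x hx
    have h1 := heq1 x hx
    show deriv ψ x = (Complex.I * (ε:ℂ))⁻¹ * _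
    rw [← h1, inv_mul_cancel_left₀ hIε]
  have hgC : HasDerivAt (fun x => ((g x : ℝ) : ℂ)) ((deriv g r : ℝ) : ℂ) r :=
    (hg r hr).hasDerivAt.ofReal_comp
  have hxC : HasDerivAt (fun x : ℝ => ((x:ℂ))) 1 r := by
    simpa using (hasDerivAt_id r).ofReal_comp
  have h1r : HasDerivAt (fun x : ℝ => (1 - (x:ℂ))) (-1) r := by
    have h := (hasDerivAt_const r (1:ℂ)).sub hxC
    rw [zero_sub] at h
    exact h
  have hψr := (hψd r hr).hasDerivAt
  have hφr := (hφd r hr).hasDerivAt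
  have hA := (h1r.const_mul (K:ℂ)).mul hψr
  have hB := (h1r.const_mul (s:ℂ)).mul hφr
  have hc := hgC.div_const ((K:ℂ)+1)
  have hFd := (hc.mul (hA.sub hB)).const_mul (Complex.I * (ε:ℂ))⁻¹
  have hdiff : DifferentiableAt ℝ (deriv ψ) r :=
    hFd.differentiableAt.congr_of_eventuallyEq hEq
  have hD : deriv (deriv ψ) r = (Complex.I * (ε:ℂ)) ⁻¹ *
      (((deriv g r : ℝ) : ℂ) / ((K:ℂ)+1) *
          ((K:ℂ) * (1 - (r:ℂ)) * ψ r - (s:ℂ) * (1 - (r:ℂ)) * φ r)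
        + (g r : ℂ) / ((K:ℂ)+1) *
          (((K:ℂ) * (-1) * ψ r + (K:ℂ) * (1 - (r:ℂ)) * deriv ψ r)
            - ((s:ℂ) * (-1) * φ r + (s:ℂ) * (1 - (r:ℂ)) * deriv φ r))) := by
    rw [hEq.deriv_eq]
    exact hFd.deriv
  refine ⟨hdiff, ?_⟩
  have hp := heq1 r hr
  have hq := heq2 r hr
  have hs2 : (s:ℂ)^2 = (K:ℂ) := by
    rw [hsdef]
    norm_cast
    exact Real.sq_sqrt hK0
  have hgrne : ((g r : ℝ) : ℂ) ≠ 0 := Complex.ofReal_ne_zero.mpr (hgne r hr)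
  have hI2 : Complex.I ^ 2 = -1 := Complex.I_sq
  have hgg : (g r : ℂ) * (g r : ℂ)⁻¹ = 1 := mul_inv_cancel₀ hgrne
  have hKK : ((K:ℂ)+1) * ((K:ℂ)+1)⁻¹ = 1 := mul_inv_cancel₀ hK1
  have hE3 : Complex.I * (ε:ℂ) * deriv (deriv ψ) r =
      ((deriv g r : ℝ) : ℂ) / ((K:ℂ)+1) *
          ((K:ℂ) * (1 - (r:ℂ)) * ψ r - (s:ℂ) * (1 - (r:ℂ)) * φ r)
        + (g r : ℂ) / ((K:ℂ)+1) *
          (((K:ℂ) * (-1) * ψ r + (K:ℂ) * (1 - (r:ℂ)) * deriv ψ r)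
            - ((s:ℂ) * (-1) * φ r + (s:ℂ) * (1 - (r:ℂ)) * deriv φ r)) := by
    rw [hD, mul_inv_cancel_left₀ hIε]
  rw [Complex.ofReal_div]
  linear_combination
    ((-1)*Complex.I*(ε:ℂ) + Complex.I*(ε:ℂ)*((deriv g r : ℝ) : ℂ)*(g r:ℂ)⁻¹ + (-1)*Complex.I*(ε:ℂ)*(r:ℂ)*((deriv g r : ℝ) : ℂ)*(g r:ℂ)⁻¹ + (-1)*Complex.I^2*(g r:ℂ) + Complex.I^2*(r:ℂ)*(g r:ℂ) + Complex.I^2*(K:ℂ)*(g r:ℂ)*((K:ℂ)+1)⁻¹ + (-2)*Complex.I^2*(K:ℂ)*(r:ℂ)*(g r:ℂ)*((K:ℂ)+1)⁻¹ + Complex.I^2*(K:ℂ)*(r:ℂ)^2*(g r:ℂ)*((K:ℂ)+1)⁻¹) * hp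
    + ((-1)*Complex.I^2*(s:ℂ)*(g r:ℂ)*((K:ℂ)+1)⁻¹ + (2)*Complex.I^2*(s:ℂ)*(r:ℂ)*(g r:ℂ)*((K:ℂ)+1)⁻¹ + (-1)*Complex.I^2*(s:ℂ)*(r:ℂ)^2*(g r:ℂ)*((K:ℂ)+1)⁻¹) * hq
    + ((-1)*Complex.I*(ε:ℂ) + Complex.I*(ε:ℂ)*(r:ℂ)) * hE3
    + ((-1)*(g r:ℂ)^2*((K:ℂ)+1)⁻¹^2*ψ r + (3)*(r:ℂ)*(g r:ℂ)^2*((K:ℂ)+1)⁻¹^2*ψ r + (-3)*(r:ℂ)^2*(g r:ℂ)^2*((K:ℂ)+1)⁻¹^2*ψ r + (r:ℂ)^3*(g r:ℂ)^2*((K:ℂ)+1)⁻¹^2*ψ r) * hs2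
    + ((-1)*(K:ℂ)*(g r:ℂ)^2*((K:ℂ)+1)⁻¹*ψ r + (2)*(K:ℂ)*(r:ℂ)*(g r:ℂ)^2*((K:ℂ)+1)⁻¹*ψ r + (-1)*(K:ℂ)*(r:ℂ)^2*(g r:ℂ)^2*((K:ℂ)+1)⁻¹*ψ r + (K:ℂ)^2*(g r:ℂ)^2*((K:ℂ)+1)⁻¹^2*ψ r + (-3)*(K:ℂ)^2*(r:ℂ)*(g r:ℂ)^2*((K:ℂ)+1)⁻¹^2*ψ r + (3)*(K:ℂ)^2*(r:ℂ)^2*(g r:ℂ)^2*((K:ℂ)+1)⁻¹^2*ψ r + (-1)*(K:ℂ)^2*(r:ℂ)^3*(g r:ℂ)^2*((K:ℂ)+1)⁻¹^2*ψ r + (ε:ℂ)^2*deriv (deriv ψ) r + (ε:ℂ)^2*deriv ψ r + (-1)*(ε:ℂ)^2*((deriv g r : ℝ) : ℂ)*(g r:ℂ)⁻¹*deriv ψ r + (-1)*(ε:ℂ)^2*(r:ℂ)*deriv (deriv ψ) r + (ε:ℂ)^2*(r:ℂ)*((deriv g r : ℝ) : ℂ)*(g r:ℂ)⁻¹*deriv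 ψ r + (s:ℂ)*(g r:ℂ)^2*((K:ℂ)+1)⁻¹*φ r + (-1)*(s:ℂ)*(g r:ℂ)^2*((K:ℂ)+1)⁻¹^2*φ r + (-2)*(s:ℂ)*(r:ℂ)*(g r:ℂ)^2*((K:ℂ)+1)⁻¹*φ r + (2)*(s:ℂ)*(r:ℂ)*(g r:ℂ)^2*((K:ℂ)+1)⁻¹^2*φ r + (s:ℂ)*(r:ℂ)^2*(g r:ℂ)^2*((K:ℂ)+1)⁻¹*φ r + (-1)*(s:ℂ)*(r:ℂ)^2*(g r:ℂ)^2*((K:ℂ)+1)⁻¹^2*φ r + (-1)*(s:ℂ)*(K:ℂ)*(g r:ℂ)^2*((K:ℂ)+1)⁻¹^2*φ r + (2)*(s:ℂ)*(K:ℂ)*(r:ℂ)*(g r:ℂ)^2*((K:ℂ)+1)⁻¹^2*φ r + (-1)*(s:ℂ)*(K:ℂ)*(r:ℂ)^2*(g r:ℂ)^2*((K:ℂ)+1)⁻¹^2*φ r + (s:ℂ)^2*(g r:ℂ)^2*((K:ℂ)+1)⁻¹^2*ψ r + (-3)*(s:ℂ)^2*(r:ℂ)*(g r:ℂ)^2*((K:ℂ)+1)⁻¹^2*ψ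 r + (3)*(s:ℂ)^2*(r:ℂ)^2*(g r:ℂ)^2*((K:ℂ)+1)⁻¹^2*ψ r + (-1)*(s:ℂ)^2*(r:ℂ)^3*(g r:ℂ)^2*((K:ℂ)+1)⁻¹^2*ψ r + Complex.I*(ε:ℂ)*(g r:ℂ)*deriv ψ r + (-1)*Complex.I*(ε:ℂ)*(r:ℂ)*(g r:ℂ)*deriv ψ r + (-1)*Complex.I*(ε:ℂ)*(K:ℂ)*(g r:ℂ)*((K:ℂ)+1)⁻¹*deriv ψ r + (2)*Complex.I*(ε:ℂ)*(K:ℂ)*(r:ℂ)*(g r:ℂ)*((K:ℂ)+1)⁻¹*deriv ψ r + (-1)*Complex.I*(ε:ℂ)*(K:ℂ)*(r:ℂ)^2*(g r:ℂ)*((K:ℂ)+1)⁻¹*deriv ψ r + Complex.I*(s:ℂ)*(ε:ℂ)*(g r:ℂ)*((K:ℂ)+1)⁻¹*deriv φ r + (-2)*Complex.I*(s:ℂ)*(ε:ℂ)*(r:ℂ)*(g r:ℂ)*((K:ℂ)+1)⁻¹*deriv φ r + Complex.I*(s:ℂ)*(ε:ℂ)*(r:ℂ)^2*(g r:ℂ)*((K:ℂ)+1)⁻¹*deriv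 φ r) * hI2
    + (Complex.I*(ε:ℂ)*(K:ℂ)*((deriv g r : ℝ) : ℂ)*((K:ℂ)+1)⁻¹*ψ r + (-2)*Complex.I*(ε:ℂ)*(K:ℂ)*(r:ℂ)*((deriv g r : ℝ) : ℂ)*((K:ℂ)+1)⁻¹*ψ r + Complex.I*(ε:ℂ)*(K:ℂ)*(r:ℂ)^2*((deriv g r : ℝ) : ℂ)*((K:ℂ)+1)⁻¹*ψ r + (-1)*Complex.I*(s:ℂ)*(ε:ℂ)*((deriv g r : ℝ) : ℂ)*((K:ℂ)+1)⁻¹*φ r + (2)*Complex.I*(s:ℂ)*(ε:ℂ)*(r:ℂ)*((deriv g r : ℝ) : ℂ)*((K:ℂ)+1)⁻¹*φ r + (-1)*Complex.I*(s:ℂ)*(ε:ℂ)*(r:ℂ)^2*((deriv g r : ℝ) : ℂ)*((K:ℂ)+1)⁻¹*φ r) * hgg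
    + ((-1)*(K:ℂ)*(g r:ℂ)^2*((K:ℂ)+1)⁻¹*ψ r + (3)*(K:ℂ)*(r:ℂ)*(g r:ℂ)^2*((K:ℂ)+1)⁻¹*ψ r + (-3)*(K:ℂ)*(r:ℂ)^2*(g r:ℂ)^2*((K:ℂ)+1)⁻¹*ψ r + (K:ℂ)*(r:ℂ)^3*(g r:ℂ)^2*((K:ℂ)+1)⁻¹*ψ r + (s:ℂ)*(g r:ℂ)^2*((K:ℂ)+1)⁻¹*φ r + (-2)*(s:ℂ)*(r:ℂ)*(g r:ℂ)^2*((K:ℂ)+1)⁻¹*φ r + (s:ℂ)*(r:ℂ)^2*(g r:ℂ)^2*((K:ℂ)+1)⁻¹*φ r) * hKK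
end

section
/- Let K ≥ 1 be a real number, ε a nonzero real number, and g : (0,1) → ℝ differentiable and nonvanishing. Suppose ψ, φ : (0,1) → ℂ are differentiable and satisfy i ε ψ′(r) = (g(r)/(K+1)) [K(1−r) ψ(r) − √K (1−r) φ(r)] and i ε φ′(r) = (g(r)/(K+1)) [−√K(1−r) ψ(r) + (1+rK) φ(r)] on (0,1). Then φ is twice differentiable on (0,1) and satisfies the decoupled second-order equation ε² (1−r) φ″(r) + ε [ε(1 − (g′(r)/g(r))(1−r)) + i(1−r) g(r)] φ′(r) + (−g(r)² K (1−r)² r/(K+1) + i g(r) ε) φ(r) = 0 for all r ∈ (0,1). -/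
set_option maxHeartbeats 1000000


/-- the unmarked amplitude `φ` of the coupled Grover Schrödinger system is
twice differentiable on `(0,1)` and satisfies the decoupled second-order equation
`ε²(1-r)φ″ + ε[ε(1 - (g′/g)(1-r)) + i(1-r)g]φ′ + (-g²K(1-r)²r/(K+1) + igε)φ = 0`. -/
theorem grover_phi_second_order_ode
    (K : ℝ) (hK : 1 ≤ K) (ε : ℝ) (hε : ε ≠ 0) (g : ℝ → ℝ)
    (hg : ∀ r ∈ Set.Ioo (0 : ℝ) 1, DifferentiableAt ℝ g r)
    (hgne : ∀ r ∈ Set.Ioo (0 : ℝ) 1, g r ≠ 0)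
    (ψ φ : ℝ → ℂ)
    (hψd : ∀ r ∈ Set.Ioo (0 : ℝ) 1, DifferentiableAt ℝ ψ r)
    (hφd : ∀ r ∈ Set.Ioo (0 : ℝ) 1, DifferentiableAt ℝ φ r)
    (heq1 : ∀ r ∈ Set.Ioo (0 : ℝ) 1,
      Complex.I * (ε : ℂ) * deriv ψ r =
        ((g r : ℂ) / ((K : ℂ) + 1)) *
          ((K : ℂ) * (1 - (r : ℂ)) * ψ r
            - (Real.sqrt K : ℂ) * (1 - (r : ℂ)) * φ r))
    (heq2 : ∀ r ∈ Set.Ioo (0 : ℝ) 1,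
      Complex.I * (ε : ℂ) * deriv φ r =
        ((g r : ℂ) / ((K : ℂ) + 1)) *
          (-(Real.sqrt K : ℂ) * (1 - (r : ℂ)) * ψ r
            + (1 + (r : ℂ) * (K : ℂ)) * φ r)) :
    ∀ r ∈ Set.Ioo (0 : ℝ) 1,
      DifferentiableAt ℝ (deriv φ) r
      ∧ (ε : ℂ) ^ 2 * (1 - (r : ℂ)) * deriv (deriv φ) r
          + (ε : ℂ) * ((ε : ℂ) * (1 - ((deriv g r / g r : ℝ) : ℂ) * (1 - (r : ℂ)))
              + Complex.I * (1 - (r : ℂ)) * (g r : ℂ)) * deriv φ r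
          + (-((g r : ℂ) ^ 2 * (K : ℂ) * (1 - (r : ℂ)) ^ 2 * (r : ℂ) / ((K : ℂ) + 1))
              + Complex.I * (g r : ℂ) * (ε : ℂ)) * φ r
        = 0 := by
  intro r hrmem
  obtain ⟨hr0, hr1⟩ := hrmem
  have hrm : r ∈ Set.Ioo (0:ℝ) 1 := ⟨hr0, hr1⟩
  have hK0 : (0:ℝ) < K := lt_of_lt_of_le one_pos hK
  have hs : ((Real.sqrt K : ℝ) : ℂ) ≠ 0 := by
    exact_mod_cast ne_of_gt (Real.sqrt_pos.mpr hK0)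
  have hsK : ((K:ℝ):ℂ) = ((Real.sqrt K : ℝ) : ℂ)^2 := by
    rw [← Complex.ofReal_pow, Real.sq_sqrt hK0.le]
  have hgr : ((g r : ℝ) : ℂ) ≠ 0 := by exact_mod_cast hgne r hrm
  have hεC : ((ε:ℝ):ℂ) ≠ 0 := by exact_mod_cast hε
  have hIε : Complex.I * (ε:ℂ) ≠ 0 := mul_ne_zero Complex.I_ne_zero hεC
  have hu : (1:ℂ) - (r:ℂ) ≠ 0 := sub_ne_zero.mpr (by exact_mod_cast hr1.ne')
  have hK1 : ((K:ℝ):ℂ) + 1 ≠ 0 := by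
    have h : ((K+1:ℝ):ℂ) ≠ 0 := Complex.ofReal_ne_zero.mpr (by linarith)
    push_cast at h; exact h
  -- derivative pieces at r
  have hψ' := (hψd r hrm).hasDerivAt
  have hφ' := (hφd r hrm).hasDerivAt
  have hg' : HasDerivAt (fun x : ℝ => ((g x : ℝ) : ℂ)) ((deriv g r : ℝ) : ℂ) r :=
    ((hg r hrm).hasDerivAt).ofReal_comp
  have hid : HasDerivAt (fun x : ℝ => (x:ℂ)) 1 r := by
    simpa using (hasDerivAt_id r).ofReal_comp
  have h1r : HasDerivAt (fun x : ℝ => (1:ℂ) - (x:ℂ)) (-1) r := by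
    exact ((hasDerivAt_const r (1:ℂ)).sub hid).congr_deriv (by ring)
  have hA : HasDerivAt
      (fun x : ℝ => -(Real.sqrt K : ℂ) * (1 - (x:ℂ)) * ψ x + (1 + (x:ℂ) * (K:ℂ)) * φ x)
      ((-(Real.sqrt K : ℂ) * (-1)) * ψ r + (-(Real.sqrt K : ℂ) * (1 - (r:ℂ))) * deriv ψ r
        + ((1 * (K:ℂ)) * φ r + (1 + (r:ℂ) * (K:ℂ)) * deriv φ r)) r :=
    ((h1r.const_mul (-(Real.sqrt K : ℂ))).mul hψ').add
      (((hid.mul_const (K:ℂ)).const_add 1).mul hφ')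
  have hFd := (( (hg'.div_const ((K:ℂ)+1)).mul hA).const_mul ((Complex.I * (ε:ℂ))⁻¹))
  have hFeq : Set.EqOn (deriv φ)
      (fun x => (Complex.I * (ε:ℂ))⁻¹ *
        (((g x : ℝ) : ℂ) / ((K:ℂ) + 1) *
          (-(Real.sqrt K : ℂ) * (1 - (x:ℂ)) * ψ x + (1 + (x:ℂ) * (K:ℂ)) * φ x)))
      (Set.Ioo (0:ℝ) 1) := by
    intro x hx
    have h2 := heq2 x hx
    calc deriv φ x = (Complex.I * (ε:ℂ))⁻¹ * (Complex.I * (ε:ℂ) * deriv φ x) :=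
          (inv_mul_cancel_left₀ hIε _).symm
      _ = _ := by rw [h2]
  have hEv : deriv φ =ᶠ[nhds r] _ :=
    Filter.eventuallyEq_of_mem (isOpen_Ioo.mem_nhds hrm) hFeq
  have hdd := hFd.congr_of_eventuallyEq hEv
  refine ⟨hdd.differentiableAt, ?_⟩
  have hD := hdd.deriv
  -- polynomial (division-free) versions of the hypotheses
  have h1' : Complex.I * (ε:ℂ) * deriv ψ r * ((K:ℂ)+1) =
      ((g r : ℝ):ℂ) * ((K : ℂ) * (1 - (r : ℂ)) * ψ r
        - (Real.sqrt K : ℂ) * (1 - (r : ℂ)) * φ r) := by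
    rw [heq1 r hrm]; field_simp
  have h2' : Complex.I * (ε:ℂ) * deriv φ r * ((K:ℂ)+1) =
      ((g r : ℝ):ℂ) * (-(Real.sqrt K : ℂ) * (1 - (r : ℂ)) * ψ r
        + (1 + (r : ℂ) * (K : ℂ)) * φ r) := by
    rw [heq2 r hrm]; field_simp
  have hD' : Complex.I * (ε:ℂ) * ((K:ℂ)+1) * deriv (deriv φ) r =
      ((deriv g r : ℝ):ℂ) * (-(Real.sqrt K : ℂ) * (1 - (r:ℂ)) * ψ r
          + (1 + (r:ℂ) * (K:ℂ)) * φ r)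
        + ((g r : ℝ):ℂ) * ((Real.sqrt K : ℂ) * ψ r
          - (Real.sqrt K : ℂ) * (1 - (r:ℂ)) * deriv ψ r
          + ((K:ℂ) * φ r + (1 + (r:ℂ) * (K:ℂ)) * deriv φ r)) := by
    rw [hD]; field_simp
    try ring
    try tauto
  have htg : ((deriv g r / g r : ℝ) : ℂ) * ((g r : ℝ):ℂ) = ((deriv g r : ℝ):ℂ) := by
    rw [Complex.ofReal_div]; exact div_mul_cancel₀ _ hgr
  have hw : (((K:ℝ):ℂ) + 1) * (((K:ℝ):ℂ) + 1)⁻¹ = 1 := mul_inv_cancel₀ hK1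
  have hs2 : ((Real.sqrt K : ℝ) : ℂ)^2 = ((K:ℝ):ℂ) := hsK.symm
  have h0 : ((g r : ℝ):ℂ) * (((K:ℝ):ℂ) + 1)^2 ≠ 0 := mul_ne_zero hgr (pow_ne_zero 2 hK1)
  apply mul_left_cancel₀ h0
  linear_combination
    (-(Complex.I * (ε:ℂ) * ((g r : ℝ):ℂ) * (((K:ℝ):ℂ)+1) * (1 - (r:ℂ)))) * hD'
    + ((Real.sqrt K : ℂ) * ((g r : ℝ):ℂ)^2 * (1 - (r:ℂ))^2) * h1'
    + (Complex.I * (ε:ℂ) * ((deriv g r : ℝ):ℂ) * (1 - (r:ℂ)) * (((K:ℝ):ℂ)+1)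
        - Complex.I * (ε:ℂ) * ((g r : ℝ):ℂ) * (((K:ℝ):ℂ)+1)
        + ((g r : ℝ):ℂ)^2 * ((K:ℝ):ℂ) * (1 - (r:ℂ))^2) * h2'
    + (-(φ r * ((g r : ℝ):ℂ)^3 * (1 - (r:ℂ))^3)) * hs2
    + (-(deriv φ r * ((ε:ℝ):ℂ)^2 * (1 - (r:ℂ)) * (((K:ℝ):ℂ)+1)^2)) * htg
    + (-(φ r * ((g r : ℝ):ℂ)^3 * ((K:ℝ):ℂ) * (r:ℂ) * (1 - (r:ℂ))^2 * (((K:ℝ):ℂ)+1))) * hw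
    + (((ε:ℝ):ℂ)^2 * (((K:ℝ):ℂ)+1)^2 * (deriv (deriv φ) r * ((g r : ℝ):ℂ) * (1 - (r:ℂ))
        - deriv φ r * ((deriv g r : ℝ):ℂ) * (1 - (r:ℂ))
        + deriv φ r * ((g r : ℝ):ℂ))) * Complex.I_mul_I
end

section
/- Let K ≥ 1 be a real number and define F⁺ : (0,1) → ℝ by F⁺(r) = (1−r) / √( √(K+1) · Δ(r) · [K(2r−1) + (K+1)Δ(r) + 1] ). Then F⁺ is positive and differentiable on (0,1) and satisfies the transport equation F⁺′(r)/F⁺(r) = −(1/2)[Δ′(r)/Δ(r) + 1/(1−r) + 1/((1−r) Δ(r))] for all r ∈ (0,1). -/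
/-- The spectral gap `Δ(r) = √(1 - 4 K r (1-r)/(K+1))` of the restricted Grover Hamiltonian. -/
noncomputable def groverGap (K r : ℝ) : ℝ :=
  Real.sqrt (1 - 4 * K * r * (1 - r) / (K + 1))

/-- The zeroth-order WKB amplitude
`F⁺(r) = (1-r)/√(√(K+1) Δ(r) [K(2r-1) + (K+1)Δ(r) + 1])`. -/
noncomputable def wkbFplus (K : ℝ) : ℝ → ℝ :=
  fun r => (1 - r) /
    Real.sqrt (Real.sqrt (K + 1) * groverGap K r *
      (K * (2 * r - 1) + (K + 1) * groverGap K r + 1))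

/-- `F⁺` is positive and differentiable on `(0,1)` and satisfies the transport
equation `F⁺′/F⁺ = -(1/2)[Δ′/Δ + 1/(1-r) + 1/((1-r)Δ)]`. -/
theorem grover_wkb_Fplus_transport (K : ℝ) (hK : 1 ≤ K) :
    ∀ r ∈ Set.Ioo (0 : ℝ) 1,
      0 < wkbFplus K r
      ∧ DifferentiableAt ℝ (wkbFplus K) r
      ∧ deriv (wkbFplus K) r / wkbFplus K r
          = -(1 / 2) * (deriv (groverGap K) r / groverGap K r + 1 / (1 - r)
              + 1 / ((1 - r) * groverGap K r)) := by
  intro r hr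
  obtain ⟨hr0, hr1⟩ := hr
  have h1r : (0:ℝ) < 1 - r := by linarith
  have hK1 : (0:ℝ) < K + 1 := by linarith
  have hg : (0:ℝ) < 1 - 4 * K * r * (1 - r) / (K + 1) := by
    rw [sub_pos, div_lt_one hK1]; nlinarith [sq_nonneg (2*r-1)]
  set d := groverGap K r with hd_def
  have hd : 0 < d := Real.sqrt_pos.mpr hg
  have hd2 : d ^ 2 = 1 - 4 * K * r * (1 - r) / (K + 1) := Real.sq_sqrt hg.le
  have hd2' : (K+1) * d ^ 2 = K + 1 - 4*K*r*(1-r) := by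
    rw [hd2]; field_simp
  set s := Real.sqrt (K+1) with hs_def
  have hs : 0 < s := Real.sqrt_pos.mpr hK1
  set b := K * (2*r-1) + (K+1) * d + 1 with hb_def
  have hb : 0 < b := by
    rcases le_or_gt (K*(1-2*r)) 1 with h | h
    · have : 0 < (K+1) * d := mul_pos hK1 hd
      rw [hb_def]; nlinarith
    · have ha2 : ((K+1)*d)^2 - (K*(1-2*r)-1)^2 = 4*K*(1-r)^2 := by
        linear_combination (K+1) * hd2'
      have hK0 : (0:ℝ) < K := by linarith
      have h4 : 0 < 4*K*(1-r)^2 := by positivity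
      have had : 0 < (K+1)*d := mul_pos hK1 hd
      rw [hb_def]; nlinarith
  have hsdb : 0 < s * d * b := by positivity
  set q := Real.sqrt (s * d * b) with hq_def
  have hq : 0 < q := Real.sqrt_pos.mpr hsdb
  have hq2 : q ^ 2 = s * d * b := Real.sq_sqrt hsdb.le
  -- derivative of the inner polynomial of the gap
  have hgd : HasDerivAt (fun x : ℝ => 1 - 4 * K * x * (1 - x) / (K + 1))
      (-(4*K*(1-2*r))/(K+1)) r := by
    have h1 : HasDerivAt (fun x : ℝ => 4 * K * x * (1 - x)) (4*K*(1-2*r)) r := by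
      have h2 := (((hasDerivAt_id r).const_mul (4*K)).mul
        ((hasDerivAt_const r (1:ℝ)).sub (hasDerivAt_id r)))
      exact h2.congr_deriv (by simp only [Pi.sub_apply, id_eq]; ring)
    have h3 := (hasDerivAt_const r (1:ℝ)).sub (h1.div_const (K+1))
    exact h3.congr_deriv (by ring)
  -- derivative of the gap
  have hDd : HasDerivAt (groverGap K) (1/(2*d) * (-(4*K*(1-2*r))/(K+1))) r := by
    have h := (Real.hasDerivAt_sqrt hg.ne').comp r hgd
    exact h
  set D' := 1/(2*d) * (-(4*K*(1-2*r))/(K+1)) with hD'_def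
  have hKD' : (K+1) * (D' * d) = -(2*K*(1-2*r)) := by
    rw [hD'_def]; field_simp; ring
  -- derivative of b(x)
  have hBd : HasDerivAt (fun x : ℝ => K*(2*x-1) + (K+1)*groverGap K x + 1)
      (2*K + (K+1)*D') r := by
    have h1 : HasDerivAt (fun x : ℝ => K*(2*x-1)) (2*K) r := by
      have := (((hasDerivAt_id r).const_mul (2:ℝ)).sub_const 1).const_mul K
      exact this.congr_deriv (by ring)
    exact (h1.add (hDd.const_mul (K+1))).add_const 1
  set H' := s*D'*b + s*d*(2*K+(K+1)*D') with hH_def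
  -- derivative of the product inside the square root
  have hHd : HasDerivAt (fun x : ℝ => Real.sqrt (K+1) * groverGap K x *
      (K*(2*x-1) + (K+1)*groverGap K x + 1)) H' r := by
    have h := ((hDd.const_mul s).mul hBd)
    exact h
  -- derivative of the square root
  have hQd : HasDerivAt (fun x : ℝ => Real.sqrt (Real.sqrt (K+1) * groverGap K x *
      (K*(2*x-1) + (K+1)*groverGap K x + 1))) (1/(2*q) * H') r := by
    have hne : Real.sqrt (K+1) * groverGap K r *
        (K*(2*r-1) + (K+1)*groverGap K r + 1) ≠ 0 := by
      rw [← hd_def, ← hs_def, ← hb_def]; exact hsdb.ne'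
    have h := (Real.hasDerivAt_sqrt hne).comp r hHd
    exact h
  have hnum : HasDerivAt (fun x : ℝ => 1 - x) (-1) r := by
    exact ((hasDerivAt_const r (1:ℝ)).sub (hasDerivAt_id r)).congr_deriv (by norm_num)
  have hF : HasDerivAt (wkbFplus K) (((-1) * q - (1-r) * (1/(2*q) * H')) / q^2) r := by
    have h := hnum.div hQd hq.ne'
    exact h
  refine ⟨?_, hF.differentiableAt, ?_⟩
  · exact div_pos h1r hq
  · rw [hF.deriv, hDd.deriv]
    have hFr : wkbFplus K r = (1-r)/q := rfl
    rw [hFr]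
    have stepA : ((-1) * q - (1-r) * (1/(2*q) * H')) / q^2 / ((1-r)/q)
        = -1/(1-r) - H'/(2*q^2) := by
      field_simp
    rw [stepA, hq2]
    have key1 : (2*K + (K+1)*D') * ((1-r)*d) = b * (1-d) := by
      rw [hb_def]
      linear_combination (1-r) * hKD' + hd2'
    have key3 : (2*K + (K+1)*D') / b = (1-d) / ((1-r)*d) := by
      rw [div_eq_div_iff hb.ne' (by positivity)]
      linear_combination key1
    have e2 : H'/(2*(s*d*b)) = (D'*b + d*(2*K+(K+1)*D'))/(2*(d*b)) := by
      rw [show H' = s*(D'*b + d*(2*K+(K+1)*D')) by rw [hH_def]; ring,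
        show (2*(s*d*b)) = s*(2*(d*b)) by ring, mul_div_mul_left _ _ hs.ne']
    have e3 : (D'*b + d*(2*K+(K+1)*D'))/(2*(d*b)) = (D'/d + (2*K+(K+1)*D')/b)/2 := by
      field_simp
    rw [e2, e3, key3]
    field_simp
    ring
end

section
/- Let K ≥ 1 be a real number. For every r ∈ (0,1), the derivative of r ↦ log[ (K(2r−1) + (K+1)Δ(r) + 1) / (1−r) ] equals 1/((1−r) Δ(r)); i.e. this function is an antiderivative of 1/((1−r)Δ(r)) on (0,1). -/
/-- on `(0,1)`, the function
`r ↦ log[(K(2r-1) + (K+1)Δ(r) + 1)/(1-r)]` is an antiderivative of `1/((1-r)Δ(r))`. -/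
theorem grover_antiderivative (K : ℝ) (hK : 1 ≤ K) :
    ∀ r ∈ Set.Ioo (0 : ℝ) 1,
      HasDerivAt
        (fun r : ℝ => Real.log ((K * (2 * r - 1) + (K + 1) * groverGap K r + 1) / (1 - r)))
        (1 / ((1 - r) * groverGap K r)) r := by
  intro r hr
  obtain ⟨hr0, hr1⟩ := hr
  have hK0 : (0:ℝ) < K := lt_of_lt_of_le one_pos hK
  have hK1 : (0:ℝ) < K + 1 := by linarith
  set u : ℝ := 1 - 4 * K * r * (1 - r) / (K + 1) with hu_def
  have hu : 0 < u := by
    rw [hu_def, sub_pos, div_lt_one hK1]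
    nlinarith [sq_nonneg (2*r - 1), sq_nonneg (1 - 2*r)]
  set Δ : ℝ := Real.sqrt u with hΔ_def
  have hΔpos : 0 < Δ := Real.sqrt_pos.mpr hu
  have hΔsq : Δ ^ 2 = u := Real.sq_sqrt hu.le
  have h4 : 4 * K * r * (1 - r) / (K + 1) < 4 * r * (1 - r) := by
    rw [div_lt_iff₀ hK1]; nlinarith [mul_pos hr0 (by linarith : (0:ℝ) < 1 - r)]
  have hΔgt : 1 - 2 * r < Δ := by
    have hsq : (1 - 2 * r) ^ 2 < Δ ^ 2 := by
      rw [hΔsq, hu_def]; nlinarith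
    exact lt_of_pow_lt_pow_left₀ 2 hΔpos.le hsq
  -- derivative of u
  have hud : HasDerivAt (fun x : ℝ => 1 - 4 * K * x * (1 - x) / (K + 1))
      (4 * K * (2 * r - 1) / (K + 1)) r := by
    have h := (((hasDerivAt_id r).const_mul (4*K)).mul
      ((hasDerivAt_const r (1:ℝ)).sub (hasDerivAt_id r))).div_const (K+1)
    have h2 := (hasDerivAt_const r (1:ℝ)).sub h
    exact h2.congr_deriv (by simp only [Pi.sub_apply, id_eq]; ring)
  have hΔd : HasDerivAt (fun x : ℝ => groverGap K x)
      (4 * K * (2 * r - 1) / (K + 1) / (2 * Δ)) r := by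
    have h := (Real.hasDerivAt_sqrt hu.ne').comp r hud
    simpa [groverGap, hΔ_def, div_eq_mul_inv, mul_comm, mul_assoc, mul_left_comm, Function.comp_def] using h
  set N : ℝ := K * (2 * r - 1) + (K + 1) * Δ + 1 with hN_def
  have hNpos : 0 < N := by nlinarith [hΔgt, hΔpos]
  have h1r : (0:ℝ) < 1 - r := by linarith
  have hNd : HasDerivAt (fun x : ℝ => K * (2 * x - 1) + (K + 1) * groverGap K x + 1)
      (2 * K + (K + 1) * (4 * K * (2 * r - 1) / (K + 1) / (2 * Δ))) r := by
    have h := ((((hasDerivAt_id r).const_mul (2:ℝ)).sub_const 1).const_mul K).add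
      (hΔd.const_mul (K+1)) |>.add_const 1
    exact h.congr_deriv (by ring)
  have hgd : HasDerivAt
      (fun x : ℝ => (K * (2 * x - 1) + (K + 1) * groverGap K x + 1) / (1 - x))
      (((2 * K + (K + 1) * (4 * K * (2 * r - 1) / (K + 1) / (2 * Δ))) * (1 - r)
        - N * (-1)) / (1 - r) ^ 2) r := by
    have hden : HasDerivAt (fun x : ℝ => 1 - x) (-1) r := by
      simpa [Pi.sub_def] using (hasDerivAt_const r (1:ℝ)).sub (hasDerivAt_id r)
    exact hNd.div hden h1r.ne'
  have hgval : (K * (2 * r - 1) + (K + 1) * groverGap K r + 1) / (1 - r) = N / (1 - r) := rfl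
  have hgne : N / (1 - r) ≠ 0 := by positivity
  have hld := hgd.log (by rw [hgval]; exact hgne)
  have key : 2 * K * (Δ + 2 * r - 1) * (1 - r) = (1 - Δ) * N := by
    have h5 : (K + 1) * Δ ^ 2 = K + 1 - 4 * K * r * (1 - r) := by
      rw [hΔsq, hu_def]; field_simp
    nlinarith [h5]
  convert hld using 1
  rw [hgval]
  have hgap : groverGap K r = Δ := rfl
  rw [hgap]
  have hN' : (2 * K + (K + 1) * (4 * K * (2 * r - 1) / (K + 1) / (2 * Δ))) * (1 - r) - N * (-1)
      = N / Δ := by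
    rw [eq_div_iff hΔpos.ne']
    field_simp
    have h5' : (K + 1) * Δ ^ 2 = K + 1 - 4 * K * r * (1 - r) := by
      rw [hΔsq, hu_def]; field_simp
    linear_combination 2 * h5'
  rw [hN']
  field_simp
end
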